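/- For every point α in the open unit disc ℂ and every z on the unit circle, the tangential derivative of θ ↦ log|e^{iθ} - α| at z equals the tangential derivative of θ ↦ log|1 - conj(α)·e^{iθ}| at z, and both equal (α ∧ z)/|z - α|², where α ∧ z := Re(α)·Im(z) - Im(α)·Re(z). -/

import Mathlib

open Complex

lemma hasDerivAt_log_abs {f : ℝ → ℂ} {f' : ℂ} {x : ℝ} (hf : HasDerivAt f f' x)
    (h0 : f x ≠ 0) :
    HasDerivAt (fun t => Real.log (‖f t‖)) ((f' / f x).re) x := by
  have hconj : HasDerivAt (fun t => (starRingEnd ℂ) (f t)) ((starRingEnd ℂ) f') x := by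
    exact hf.star
  have hmul := hf.mul hconj
  have hre : HasDerivAt (fun t => (f t * (starRingEnd ℂ) (f t)).re)
      ((f' * (starRingEnd ℂ) (f x) + f x * (starRingEnd ℂ) f').re) x :=
    Complex.reCLM.hasFDerivAt.comp_hasDerivAt x hmul
  have hu : HasDerivAt (fun t => Complex.normSq (f t)) (2 * (f' * (starRingEnd ℂ) (f x)).re) x := by
    convert hre using 1
    · funext t; simp [Complex.mul_conj]
    · simp [Complex.add_re, Complex.mul_re, Complex.conj_re, Complex.conj_im]; ring
  have hpos : 0 < Complex.normSq (f x) := Complex.normSq_pos.mpr h0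
  have hlog := ((Real.hasDerivAt_log hpos.ne').comp x hu).div_const 2
  have heq : (fun t => Real.log (‖f t‖))
      = fun t => Real.log (Complex.normSq (f t)) / 2 := by
    funext t
    rw [Complex.norm_def, Real.log_sqrt (Complex.normSq_nonneg _)]
  rw [heq]
  refine hlog.congr_deriv ?_
  rw [Complex.div_re]
  field_simp [Complex.mul_re]
  rw [Complex.mul_re, Complex.conj_re, Complex.conj_im]; ring

/-- For α in the open unit disc and z = e^{iθ₀} on the unit circle, the tangential
derivative of θ ↦ log|e^{iθ} - α| equals that of θ ↦ log|1 - conj(α)e^{iθ}|, and both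
equal (α ∧ z)/|z - α|², where α ∧ z = Re α · Im z - Im α · Re z. -/
theorem stmt_0 (α : ℂ) (hα : ‖α‖ < 1) (θ₀ : ℝ) :
    deriv (fun θ : ℝ => Real.log (‖Complex.exp (θ * Complex.I) - α‖)) θ₀
      = (α.re * (Complex.exp (θ₀ * Complex.I)).im - α.im * (Complex.exp (θ₀ * Complex.I)).re)
        / ‖Complex.exp (θ₀ * Complex.I) - α‖ ^ 2 ∧
    deriv (fun θ : ℝ =>
        Real.log (‖1 - (starRingEnd ℂ) α * Complex.exp (θ * Complex.I)‖)) θ₀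
      = (α.re * (Complex.exp (θ₀ * Complex.I)).im - α.im * (Complex.exp (θ₀ * Complex.I)).re)
        / ‖Complex.exp (θ₀ * Complex.I) - α‖ ^ 2 := by
  set z : ℂ := Complex.exp (θ₀ * Complex.I) with hzdef
  have habsz : ‖z‖ = 1 := by
    rw [hzdef]; exact Complex.norm_exp_ofReal_mul_I θ₀
  have hz : z.re ^ 2 + z.im ^ 2 = 1 := by
    have := Complex.sq_norm z
    rw [habsz] at this
    simp [Complex.normSq_apply] at this
    nlinarith [this]
  -- derivative of θ ↦ exp (θ I)
  have hexp : HasDerivAt (fun θ : ℝ => Complex.exp (θ * Complex.I)) (z * Complex.I) θ₀ := by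
    have h1 : HasDerivAt (fun θ : ℝ => (θ : ℂ) * Complex.I) Complex.I θ₀ := by
      simpa using (Complex.ofRealCLM.hasDerivAt (x := θ₀)).mul_const Complex.I
    simpa [hzdef, mul_comm] using h1.cexp
  have hne1 : z - α ≠ 0 := by
    intro h
    rw [sub_eq_zero] at h
    rw [h] at habsz
    rw [habsz] at hα
    exact absurd hα (by norm_num)
  have hne2 : 1 - (starRingEnd ℂ) α * z ≠ 0 := by
    intro h
    have h' : (starRingEnd ℂ) α * z = 1 := (sub_eq_zero.mp h).symm
    have habs : ‖(starRingEnd ℂ) α * z‖ = ‖α‖ := by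
      rw [norm_mul, habsz, Complex.norm_conj, mul_one]
    rw [h'] at habs
    simp at habs
    rw [← habs] at hα
    exact absurd hα (by norm_num)
  -- derivatives via aux lemma
  have hd1 : HasDerivAt (fun θ : ℝ => Real.log (‖Complex.exp (θ * Complex.I) - α‖))
      ((z * Complex.I / (z - α)).re) θ₀ := by
    have hf : HasDerivAt (fun θ : ℝ => Complex.exp (θ * Complex.I) - α) (z * Complex.I) θ₀ :=
      hexp.sub_const α
    simpa [hzdef] using hasDerivAt_log_abs hf (by simpa [hzdef] using hne1)
  have hd2 : HasDerivAt
      (fun θ : ℝ => Real.log (‖1 - (starRingEnd ℂ) α * Complex.exp (θ * Complex.I)‖))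
      ((-((starRingEnd ℂ) α * (z * Complex.I)) / (1 - (starRingEnd ℂ) α * z)).re) θ₀ := by
    have hf : HasDerivAt (fun θ : ℝ => 1 - (starRingEnd ℂ) α * Complex.exp (θ * Complex.I))
        (-((starRingEnd ℂ) α * (z * Complex.I))) θ₀ := by
      simpa using (hexp.const_mul ((starRingEnd ℂ) α)).const_sub 1
    simpa [hzdef] using hasDerivAt_log_abs hf (by simpa [hzdef] using hne2)
  have hpos1 : 0 < Complex.normSq (z - α) := Complex.normSq_pos.mpr hne1
  have hpos2 : 0 < Complex.normSq (1 - (starRingEnd ℂ) α * z) := Complex.normSq_pos.mpr hne2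
  have hns : Complex.normSq (1 - (starRingEnd ℂ) α * z) = Complex.normSq (z - α) := by
    simp only [Complex.normSq_apply, Complex.sub_re, Complex.sub_im, Complex.mul_re,
      Complex.mul_im, Complex.one_re, Complex.one_im, Complex.conj_re, Complex.conj_im]
    linear_combination (α.re ^ 2 + α.im ^ 2 - 1) * hz
  have habs2 : ‖z - α‖ ^ 2 = Complex.normSq (z - α) := Complex.sq_norm _
  constructor
  · rw [hd1.deriv, habs2]
    rw [Complex.div_re]
    simp only [Complex.sub_re, Complex.sub_im, Complex.mul_re, Complex.mul_im,
      Complex.I_re, Complex.I_im]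
    field_simp
    ring_nf
  · rw [hd2.deriv, habs2]
    rw [Complex.div_re, hns]
    simp only [Complex.sub_re, Complex.sub_im, Complex.mul_re, Complex.mul_im,
      Complex.one_re, Complex.one_im, Complex.I_re, Complex.I_im, Complex.neg_re,
      Complex.neg_im, Complex.conj_re, Complex.conj_im]
    field_simp
    ring_nf
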